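/- arXiv:2009.14275 — 4 statements merged into one kernel-verified Lean document; each statement's English description precedes it below -/
import Mathlib

section
/- Every numerical h-rectangle r = (a ≤ b ≤ c ≤ d) with d = b + c - a, 0 ≤ a and d ≤ |h| for the vector h = (1,1,…,1) ∈ ℕ^n (n ≥ 2) with a < b (i.e., every 3- or 4-rectangle) is realizable: there exist vertices u ∈ S_a(h), u' ∈ S_b(h), v' ∈ S_c(h), v ∈ S_d(h) of {-1,1}^n with u + v = u' + v' and all four vertices distinct. In other words, the all-ones vector is a primitive vector. -/
open Finset

/-- A vertex of the cube `{-1,1}^n`, represented over `ℤ`. -/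
def cubeVec {n : ℕ} (v : Fin n → ℤ) : Prop := ∀ i, v i = 1 ∨ v i = -1

/-- The `a`-level of a nonnegative integer vector `h`:
vertices `v` of the cube with `h·v = |h| - 2a`. -/
def level {n : ℕ} (h : Fin n → ℕ) (a : ℤ) : Set (Fin n → ℤ) :=
  {v | cubeVec v ∧ ∑ i, (h i : ℤ) * v i = (∑ i, (h i : ℤ)) - 2 * a}
/-- The numerical `h`-rectangle `(a ≤ b ≤ c ≤ d)` is realizable: there are pairwise
distinct cube vertices in the four levels forming a rectangle. -/
def Realizable {n : ℕ} (h : Fin n → ℕ) (a b c d : ℤ) : Prop :=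
  ∃ u u' v' v : Fin n → ℤ,
    u ∈ level h a ∧ u' ∈ level h b ∧ v' ∈ level h c ∧ v ∈ level h d ∧
    u + v = u' + v' ∧
    u ≠ u' ∧ u ≠ v' ∧ u ≠ v ∧ u' ≠ v' ∧ u' ≠ v ∧ v' ≠ v

/-- `h` is a primitive vector: every 3- or 4-rectangle (those with `a < b`) is realizable. -/
def Primitive {n : ℕ} (h : Fin n → ℕ) : Prop :=
  ∀ a b c d : ℤ, a < b → b ≤ c → c ≤ d → d = b + c - a → 0 ≤ a →
    d ≤ (∑ i, (h i : ℤ)) → Realizable h a b c d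


lemma sum_pm {n : ℕ} (p : Fin n → Prop) [DecidablePred p] :
    ∑ i : Fin n, (if p i then (-1:ℤ) else 1) =
      (n : ℤ) - 2 * #(univ.filter p) := by
  have hle : #(univ.filter p) ≤ n := by
    simpa using Finset.card_filter_le (univ : Finset (Fin n)) p
  rw [Finset.sum_ite, Finset.sum_const, Finset.sum_const, Finset.filter_not,
    Finset.card_sdiff_of_subset (Finset.filter_subset _ _), Finset.card_univ, Fintype.card_fin,
    nsmul_eq_mul, nsmul_eq_mul]
  push_cast [Nat.cast_sub hle]
  ring

lemma card_cond {n B D : ℕ} (hD : D ≤ n) :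
    #(univ.filter fun i : Fin n => B ≤ i.val ∧ i.val < D) = D - B := by
  have h : (univ.filter fun i : Fin n => B ≤ i.val ∧ i.val < D).map Fin.valEmbedding
      = Finset.Ico B D := by
    ext m
    simp only [mem_map, mem_filter, mem_univ, true_and, mem_Ico, Fin.valEmbedding_apply]
    constructor
    · rintro ⟨i, hi, rfl⟩; exact hi
    · intro hm; exact ⟨⟨m, by omega⟩, hm, rfl⟩
  rw [← Finset.card_map Fin.valEmbedding, h, Nat.card_Ico]

/-- the all-ones vector of `ℕ^n` (`n ≥ 2`) is primitive. -/
theorem allOnes_primitive (n : ℕ) (hn : 2 ≤ n) :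
    Primitive (fun _ : Fin n => (1 : ℕ)) := by
  intro a b c d hab hbc hcd hd ha hdn
  have hsum : (∑ _i : Fin n, ((1:ℕ) : ℤ)) = (n : ℤ) := by simp
  rw [hsum] at hdn
  set A := a.toNat with hA
  set B := b.toNat with hB
  set C := c.toNat with hC
  set D := d.toNat with hD
  have haA : (A : ℤ) = a := Int.toNat_of_nonneg ha
  have hbB : (B : ℤ) = b := Int.toNat_of_nonneg (by omega)
  have hcC : (C : ℤ) = c := Int.toNat_of_nonneg (by omega)
  have hdD : (D : ℤ) = d := Int.toNat_of_nonneg (by omega)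
  have hAB : A < B := by omega
  have hBC : B ≤ C := by omega
  have hCD : C ≤ D := by omega
  have hDn : D ≤ n := by omega
  have hDA : D + A = B + C := by omega
  have hBD : B < D := by omega
  -- the four vertices
  refine ⟨(fun i => if i.val < A then (-1:ℤ) else 1),
    (fun i => if i.val < B then (-1:ℤ) else 1),
    (fun i => if i.val < A ∨ (B ≤ i.val ∧ i.val < D) then (-1:ℤ) else 1),
    (fun i => if i.val < D then (-1:ℤ) else 1), ?_, ?_, ?_, ?_, ?_, ?_, ?_, ?_, ?_, ?_, ?_⟩
  · refine ⟨fun i => by by_cases h : i.val < A <;> simp [h], ?_⟩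
    simp only [Nat.cast_one, one_mul, sum_pm, Finset.sum_const, Finset.card_univ,
      Fintype.card_fin, smul_eq_mul, nsmul_eq_mul, mul_one]
    have : #(univ.filter fun i : Fin n => i.val < A) = A := by
      have := card_cond (n := n) (B := 0) (D := A) (by omega)
      simpa using this
    rw [this]; omega
  · refine ⟨fun i => by by_cases h : i.val < B <;> simp [h], ?_⟩
    simp only [Nat.cast_one, one_mul, sum_pm, Finset.sum_const, Finset.card_univ,
      Fintype.card_fin, smul_eq_mul, nsmul_eq_mul, mul_one]
    have : #(univ.filter fun i : Fin n => i.val < B) = B := by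
      have := card_cond (n := n) (B := 0) (D := B) (by omega)
      simpa using this
    rw [this]; omega
  · refine ⟨fun i => by by_cases h : i.val < A ∨ (B ≤ i.val ∧ i.val < D) <;> simp [h], ?_⟩
    simp only [Nat.cast_one, one_mul, sum_pm, Finset.sum_const, Finset.card_univ,
      Fintype.card_fin, smul_eq_mul, nsmul_eq_mul, mul_one]
    have hcard : #(univ.filter fun i : Fin n => i.val < A ∨ (B ≤ i.val ∧ i.val < D)) = C := by
      rw [Finset.filter_or, Finset.card_union_of_disjoint]
      · have h1 : #(univ.filter fun i : Fin n => i.val < A) = A := by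
          have := card_cond (n := n) (B := 0) (D := A) (by omega)
          simpa using this
        rw [h1, card_cond hDn]; omega
      · rw [Finset.disjoint_filter]
        intro i _ hiA ⟨hiB, _⟩; omega
    rw [hcard]; omega
  · refine ⟨fun i => by by_cases h : i.val < D <;> simp [h], ?_⟩
    simp only [Nat.cast_one, one_mul, sum_pm, Finset.sum_const, Finset.card_univ,
      Fintype.card_fin, smul_eq_mul, nsmul_eq_mul, mul_one]
    have : #(univ.filter fun i : Fin n => i.val < D) = D := by
      have := card_cond (n := n) (B := 0) (D := D) (by omega)
      simpa using this
    rw [this]; omega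
  · funext i
    simp only [Pi.add_apply]
    split_ifs <;> omega
  · intro h
    have := congrFun h ⟨A, by omega⟩
    simp only at this
    rw [if_neg (by omega), if_pos (by omega : A < B)] at this
    omega
  · intro h
    have := congrFun h ⟨B, by omega⟩
    simp only at this
    rw [if_neg (by omega), if_pos (by omega : B < A ∨ (B ≤ B ∧ B < D))] at this
    omega
  · intro h
    have := congrFun h ⟨A, by omega⟩
    simp only at this
    rw [if_neg (by omega), if_pos (by omega : A < D)] at this
    omega
  · intro h
    have := congrFun h ⟨A, by omega⟩
    simp only at this
    rw [if_pos (by omega : A < B), if_neg (by omega : ¬(A < A ∨ (B ≤ A ∧ A < D)))] at this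
    omega
  · intro h
    have := congrFun h ⟨B, by omega⟩
    simp only at this
    rw [if_neg (by omega), if_pos (by omega : B < D)] at this
    omega
  · intro h
    have := congrFun h ⟨A, by omega⟩
    simp only at this
    rw [if_neg (by omega : ¬(A < A ∨ (B ≤ A ∧ A < D))), if_pos (by omega : A < D)] at this
    omega
end

section
/- If h ∈ ℕ^n is a primitive vector, then for every a with 0 ≤ a ≤ |h| the level S_a(h) is nonempty, and for every a with 0 < a < |h| the level S_a(h) contains at least two elements. -/
open Finset

/-- all levels of a primitive vector are nonempty, and interior levels
have at least two elements. -/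
theorem primitive_levels_nonempty (n : ℕ) (h : Fin n → ℕ) (hp : Primitive h) :
    (∀ a : ℤ, 0 ≤ a → a ≤ (∑ i, (h i : ℤ)) → (level h a).Nonempty) ∧
    (∀ a : ℤ, 0 < a → a < (∑ i, (h i : ℤ)) →
      ∃ x y, x ∈ level h a ∧ y ∈ level h a ∧ x ≠ y) := by
  have h2 : ∀ a : ℤ, 0 < a → a < (∑ i, (h i : ℤ)) →
      ∃ x y, x ∈ level h a ∧ y ∈ level h a ∧ x ≠ y := by
    intro a ha haS
    set S := (∑ i, (h i : ℤ)) with hS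
    set a' := max 0 (2*a - S) with ha'
    have h1 : a' < a := by
      rcases max_cases 0 (2*a - S) with ⟨he,_⟩|⟨he,_⟩ <;> omega
    have hd : 2*a - a' ≤ S := by
      rcases max_cases 0 (2*a - S) with ⟨he,_⟩|⟨he,_⟩ <;> omega
    obtain ⟨u, u', v', v, hu, hu', hv', hv, heq, hne⟩ :=
      hp a' a a (2*a - a') h1 le_rfl (by omega) (by ring) (le_max_left _ _) hd
    exact ⟨u', v', hu', hv', hne.2.2.2.1⟩
  refine ⟨?_, h2⟩
  intro a ha haS
  rcases eq_or_lt_of_le ha with h0 | h0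
  · refine ⟨fun _ => 1, fun i => Or.inl rfl, ?_⟩
    simp [← h0]
  rcases eq_or_lt_of_le haS with hE | hE
  · refine ⟨fun _ => -1, fun i => Or.inr rfl, ?_⟩
    simp only [mul_neg_one, Finset.sum_neg_distrib]
    omega
  · obtain ⟨x, y, hx, _, _⟩ := h2 a h0 hE
    exact ⟨x, hx⟩
end

section
/- If h ∈ ℕ^n is a primitive vector and g_0 ∈ ℕ satisfies 0 ≤ g_0 ≤ |h|/2 + 1, then the vector g = (h, g_0) ∈ ℕ^{n+1} is a primitive vector. -/
open Finset

namespace PrimSnocAux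

variable {n : ℕ} {h : Fin n → ℕ} {g0 : ℕ}

lemma snoc_weight_sum :
    ∑ i, ((Fin.snoc h g0 : Fin (n+1) → ℕ) i : ℤ) = (∑ i, (h i : ℤ)) + (g0 : ℤ) := by
  rw [Fin.sum_univ_castSucc]
  simp

lemma snoc_dot (x : Fin n → ℤ) (t : ℤ) :
    ∑ i, ((Fin.snoc h g0 : Fin (n+1) → ℕ) i : ℤ) * (Fin.snoc x t : Fin (n+1) → ℤ) i
      = (∑ i, (h i : ℤ) * x i) + (g0 : ℤ) * t := by
  rw [Fin.sum_univ_castSucc]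
  simp

lemma cube_snoc {x : Fin n → ℤ} {t : ℤ} (hx : cubeVec x) (ht : t = 1 ∨ t = -1) :
    cubeVec (Fin.snoc x t) := by
  intro i
  refine Fin.lastCases ?_ (fun j => ?_) i
  · simpa using ht
  · simpa using hx j

lemma mem_snoc_one {x : Fin n → ℤ} {a : ℤ} (hx : x ∈ level h a) :
    (Fin.snoc x 1 : Fin (n+1) → ℤ) ∈ level (Fin.snoc h g0) a := by
  obtain ⟨hc, hs⟩ := hx
  exact ⟨cube_snoc hc (Or.inl rfl), by rw [snoc_dot, snoc_weight_sum, hs]; ring⟩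

lemma mem_snoc_neg {x : Fin n → ℤ} {a : ℤ} (hx : x ∈ level h a) :
    (Fin.snoc x (-1) : Fin (n+1) → ℤ) ∈ level (Fin.snoc h g0) (a + g0) := by
  obtain ⟨hc, hs⟩ := hx
  exact ⟨cube_snoc hc (Or.inr rfl), by rw [snoc_dot, snoc_weight_sum, hs]; ring⟩

lemma snoc_add (x y : Fin n → ℤ) (t s : ℤ) :
    (Fin.snoc x t : Fin (n+1) → ℤ) + Fin.snoc y s = Fin.snoc (x + y) (t + s) := by
  funext i
  refine Fin.lastCases ?_ (fun j => ?_) i <;> simp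

lemma snoc_ne_left {x y : Fin n → ℤ} {t s : ℤ} (hxy : x ≠ y) :
    (Fin.snoc x t : Fin (n+1) → ℤ) ≠ Fin.snoc y s := by
  intro he
  exact hxy (funext fun j => by simpa using congrFun he (Fin.castSucc j))

lemma snoc_ne_last {x y : Fin n → ℤ} {t s : ℤ} (hts : t ≠ s) :
    (Fin.snoc x t : Fin (n+1) → ℤ) ≠ Fin.snoc y s := by
  intro he
  exact hts (by simpa using congrFun he (Fin.last n))

lemma ne_of_level {x y : Fin n → ℤ} {e f : ℤ} (hx : x ∈ level h e) (hy : y ∈ level h f)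
    (hef : e ≠ f) : x ≠ y := by
  intro hxy
  apply hef
  have h1 := hx.2
  have h2 := hy.2
  rw [hxy] at h1
  linarith

/-- signs (+,+,+,+) -/
lemma lift_pppp {a b c d : ℤ} (H : Realizable h a b c d) :
    Realizable (Fin.snoc h g0) a b c d := by
  obtain ⟨p, q, r, s, hp1, hq1, hr1, hs1, hsum, d12, d13, d14, d23, d24, d34⟩ := H
  exact ⟨Fin.snoc p 1, Fin.snoc q 1, Fin.snoc r 1, Fin.snoc s 1,
    mem_snoc_one hp1, mem_snoc_one hq1, mem_snoc_one hr1, mem_snoc_one hs1,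
    by rw [snoc_add, snoc_add, hsum],
    snoc_ne_left d12, snoc_ne_left d13, snoc_ne_left d14,
    snoc_ne_left d23, snoc_ne_left d24, snoc_ne_left d34⟩

/-- signs (-,-,-,-) -/
lemma lift_mmmm {a b c d : ℤ} (H : Realizable h a b c d) :
    Realizable (Fin.snoc h g0) (a + g0) (b + g0) (c + g0) (d + g0) := by
  obtain ⟨p, q, r, s, hp1, hq1, hr1, hs1, hsum, d12, d13, d14, d23, d24, d34⟩ := H
  exact ⟨Fin.snoc p (-1), Fin.snoc q (-1), Fin.snoc r (-1), Fin.snoc s (-1),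
    mem_snoc_neg hp1, mem_snoc_neg hq1, mem_snoc_neg hr1, mem_snoc_neg hs1,
    by rw [snoc_add, snoc_add, hsum],
    snoc_ne_left d12, snoc_ne_left d13, snoc_ne_left d14,
    snoc_ne_left d23, snoc_ne_left d24, snoc_ne_left d34⟩

/-- signs (+,+,-,-) -/
lemma lift_ppmm {a b c d : ℤ} (H : Realizable h a b c d) :
    Realizable (Fin.snoc h g0) a b (c + g0) (d + g0) := by
  obtain ⟨p, q, r, s, hp1, hq1, hr1, hs1, hsum, d12, d13, d14, d23, d24, d34⟩ := H
  exact ⟨Fin.snoc p 1, Fin.snoc q 1, Fin.snoc r (-1), Fin.snoc s (-1),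
    mem_snoc_one hp1, mem_snoc_one hq1, mem_snoc_neg hr1, mem_snoc_neg hs1,
    by rw [snoc_add, snoc_add, hsum],
    snoc_ne_left d12, snoc_ne_last (by norm_num), snoc_ne_last (by norm_num),
    snoc_ne_last (by norm_num), snoc_ne_last (by norm_num), snoc_ne_left d34⟩

/-- signs (+,-,+,-) -/
lemma lift_pmpm {a b c d : ℤ} (H : Realizable h a b c d) :
    Realizable (Fin.snoc h g0) a (b + g0) c (d + g0) := by
  obtain ⟨p, q, r, s, hp1, hq1, hr1, hs1, hsum, d12, d13, d14, d23, d24, d34⟩ := H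
  exact ⟨Fin.snoc p 1, Fin.snoc q (-1), Fin.snoc r 1, Fin.snoc s (-1),
    mem_snoc_one hp1, mem_snoc_neg hq1, mem_snoc_one hr1, mem_snoc_neg hs1,
    by rw [snoc_add, snoc_add, hsum, show (1 : ℤ) + (-1) = (-1) + 1 from by ring],
    snoc_ne_last (by norm_num), snoc_ne_left d13, snoc_ne_last (by norm_num),
    snoc_ne_last (by norm_num), snoc_ne_left d24, snoc_ne_last (by norm_num)⟩

/-- B2 pattern: u=p(+), u'=r(+), v'=q(-), v=s(-) -/
lemma lift_B2 {a b c d : ℤ} (H : Realizable h a b c d) :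
    Realizable (Fin.snoc h g0) a c (b + g0) (d + g0) := by
  obtain ⟨p, q, r, s, hp1, hq1, hr1, hs1, hsum, d12, d13, d14, d23, d24, d34⟩ := H
  exact ⟨Fin.snoc p 1, Fin.snoc r 1, Fin.snoc q (-1), Fin.snoc s (-1),
    mem_snoc_one hp1, mem_snoc_one hr1, mem_snoc_neg hq1, mem_snoc_neg hs1,
    by rw [snoc_add, snoc_add, show p + s = r + q from hsum.trans (add_comm q r)],
    snoc_ne_left d13, snoc_ne_last (by norm_num), snoc_ne_last (by norm_num),
    snoc_ne_last (by norm_num), snoc_ne_last (by norm_num), snoc_ne_left d24⟩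

/-- D1 pattern: u=q(+), u'=p(-), v'=s(+), v=r(-) -/
lemma lift_D1 {a b c d : ℤ} (H : Realizable h a b c d) :
    Realizable (Fin.snoc h g0) b (a + g0) d (c + g0) := by
  obtain ⟨p, q, r, s, hp1, hq1, hr1, hs1, hsum, d12, d13, d14, d23, d24, d34⟩ := H
  exact ⟨Fin.snoc q 1, Fin.snoc p (-1), Fin.snoc s 1, Fin.snoc r (-1),
    mem_snoc_one hq1, mem_snoc_neg hp1, mem_snoc_one hs1, mem_snoc_neg hr1,
    by rw [snoc_add, snoc_add, hsum.symm, show (1 : ℤ) + (-1) = (-1) + 1 from by ring],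
    snoc_ne_last (by norm_num), snoc_ne_left d24, snoc_ne_last (by norm_num),
    snoc_ne_last (by norm_num), snoc_ne_left d13, snoc_ne_last (by norm_num)⟩

/-- D2 pattern: u=r(+), u'=p(-), v'=s(+), v=q(-) -/
lemma lift_D2 {a b c d : ℤ} (H : Realizable h a b c d) :
    Realizable (Fin.snoc h g0) c (a + g0) d (b + g0) := by
  obtain ⟨p, q, r, s, hp1, hq1, hr1, hs1, hsum, d12, d13, d14, d23, d24, d34⟩ := H
  exact ⟨Fin.snoc r 1, Fin.snoc p (-1), Fin.snoc s 1, Fin.snoc q (-1),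
    mem_snoc_one hr1, mem_snoc_neg hp1, mem_snoc_one hs1, mem_snoc_neg hq1,
    by rw [snoc_add, snoc_add, show r + q = p + s from (add_comm r q).trans hsum.symm,
      show (1 : ℤ) + (-1) = (-1) + 1 from by ring],
    snoc_ne_last (by norm_num), snoc_ne_left d34, snoc_ne_last (by norm_num),
    snoc_ne_last (by norm_num), snoc_ne_left d12, snoc_ne_last (by norm_num)⟩

/-- doubling, type A: u=(x,1), u'=(x,-1), v'=(y,1), v=(y,-1) -/
lemma double_A {e f : ℤ} {x y : Fin n → ℤ} (hx : x ∈ level h e) (hy : y ∈ level h f)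
    (hef : e ≠ f) :
    Realizable (Fin.snoc h g0) e (e + g0) f (f + g0) := by
  have hxy := ne_of_level hx hy hef
  exact ⟨Fin.snoc x 1, Fin.snoc x (-1), Fin.snoc y 1, Fin.snoc y (-1),
    mem_snoc_one hx, mem_snoc_neg hx, mem_snoc_one hy, mem_snoc_neg hy,
    by rw [snoc_add, snoc_add, show (1 : ℤ) + (-1) = (-1) + 1 from by ring],
    snoc_ne_last (by norm_num), snoc_ne_left hxy, snoc_ne_last (by norm_num),
    snoc_ne_last (by norm_num), snoc_ne_left hxy, snoc_ne_last (by norm_num)⟩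

/-- doubling, type B: u=(x,1), u'=(y,1), v'=(x,-1), v=(y,-1) -/
lemma double_B {e f : ℤ} {x y : Fin n → ℤ} (hx : x ∈ level h e) (hy : y ∈ level h f)
    (hef : e ≠ f) :
    Realizable (Fin.snoc h g0) e f (e + g0) (f + g0) := by
  have hxy := ne_of_level hx hy hef
  exact ⟨Fin.snoc x 1, Fin.snoc y 1, Fin.snoc x (-1), Fin.snoc y (-1),
    mem_snoc_one hx, mem_snoc_one hy, mem_snoc_neg hx, mem_snoc_neg hy,
    by rw [snoc_add, snoc_add, add_comm y x],
    snoc_ne_left hxy, snoc_ne_last (by norm_num), snoc_ne_last (by norm_num),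
    snoc_ne_last (by norm_num), snoc_ne_last (by norm_num), snoc_ne_left hxy⟩

lemma level_nonempty (hprim : Primitive h) {k : ℤ} (h0 : 0 ≤ k)
    (hk : k ≤ ∑ i, (h i : ℤ)) : ∃ x, x ∈ level h k := by
  rcases h0.lt_or_eq with h0' | h0'
  · rcases hk.lt_or_eq with hk' | hk'
    · by_cases h2k : 2 * k ≤ ∑ i, (h i : ℤ)
      · obtain ⟨u, u', v', v, hu, hu', -⟩ :=
          hprim 0 k k (2 * k) h0' le_rfl (by linarith) (by ring) le_rfl h2k
        exact ⟨u', hu'⟩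
      · push_neg at h2k
        obtain ⟨u, u', v', v, hu, hu', -⟩ :=
          hprim (2 * k - ∑ i, (h i : ℤ)) k k (∑ i, (h i : ℤ))
            (by linarith) le_rfl hk'.le (by ring) (by linarith) le_rfl
        exact ⟨u', hu'⟩
    · refine ⟨fun _ => -1, fun _ => Or.inr rfl, ?_⟩
      simp only [mul_neg_one]
      rw [Finset.sum_neg_distrib]
      linarith
  · exact ⟨fun _ => 1, fun _ => Or.inl rfl, by simp [← h0']⟩

end PrimSnocAux

open PrimSnocAux in
/-- appending an entry `g₀ ≤ |h|/2 + 1` to a primitive vector yields a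
primitive vector. -/
theorem primitive_snoc (n : ℕ) (h : Fin n → ℕ) (hp : Primitive h) (g0 : ℕ)
    (hg : (g0 : ℚ) ≤ (∑ i, (h i : ℚ)) / 2 + 1) :
    Primitive (Fin.snoc h g0) := by
  intro a b c d hab hbc hcd hd ha hdle
  obtain ⟨S, hSdef⟩ : ∃ S : ℤ, S = ∑ i, (h i : ℤ) := ⟨_, rfl⟩
  have hScast : (S : ℚ) = ∑ i, (h i : ℚ) := by rw [hSdef]; push_cast; rfl
  have hH2 : 2 * (g0 : ℤ) ≤ S + 2 := by
    have hq : (2 : ℚ) * (g0 : ℚ) ≤ (S : ℚ) + 2 := by rw [hScast]; linarith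
    exact_mod_cast hq
  have hdle' : d ≤ S + (g0 : ℤ) := by rw [snoc_weight_sum, ← hSdef] at hdle; exact hdle
  by_cases h1 : d ≤ S
  · exact lift_pppp (hp a b c d hab hbc hcd hd ha (hSdef ▸ h1))
  push_neg at h1
  by_cases h2 : (g0 : ℤ) ≤ a
  · have R := lift_mmmm (g0 := g0) (hp (a - g0) (b - g0) (c - g0) (d - g0)
      (by omega) (by omega) (by omega) (by omega) (by omega) (by rw [← hSdef]; omega))
    rw [show a - (g0 : ℤ) + g0 = a from by ring, show b - (g0 : ℤ) + g0 = b from by ring,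
      show c - (g0 : ℤ) + g0 = c from by ring, show d - (g0 : ℤ) + g0 = d from by ring] at R
    exact R
  push_neg at h2
  by_cases h3 : b + (g0 : ℤ) ≤ c
  · have R := lift_ppmm (g0 := g0) (hp a b (c - g0) (d - g0)
      hab (by omega) (by omega) (by omega) ha (by rw [← hSdef]; omega))
    rw [show c - (g0 : ℤ) + g0 = c from by ring, show d - (g0 : ℤ) + g0 = d from by ring] at R
    exact R
  push_neg at h3
  by_cases h4 : a + (g0 : ℤ) < b
  · have R := lift_pmpm (g0 := g0) (hp a (b - g0) c (d - g0)
      (by omega) (by omega) (by omega) (by omega) ha (by rw [← hSdef]; omega))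
    rw [show b - (g0 : ℤ) + g0 = b from by ring, show d - (g0 : ℤ) + g0 = d from by ring] at R
    exact R
  push_neg at h4
  by_cases h5 : b = a + (g0 : ℤ)
  · have hc : c = d - g0 := by omega
    obtain ⟨x, hx⟩ := level_nonempty hp (k := a) ha (by rw [← hSdef]; omega)
    obtain ⟨y, hy⟩ := level_nonempty hp (k := c) (by omega) (by rw [← hSdef]; omega)
    have R := double_A (g0 := g0) hx hy (show a ≠ c from by omega)
    rw [show a + (g0 : ℤ) = b from h5.symm, show c + (g0 : ℤ) = d from by omega] at R
    exact R
  by_cases h6 : c = a + (g0 : ℤ)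
  · have hbd : d = b + (g0 : ℤ) := by omega
    obtain ⟨x, hx⟩ := level_nonempty hp (k := a) ha (by rw [← hSdef]; omega)
    obtain ⟨y, hy⟩ := level_nonempty hp (k := b) (by omega) (by rw [← hSdef]; omega)
    have R := double_B (g0 := g0) hx hy (show a ≠ b from by omega)
    rw [show a + (g0 : ℤ) = c from h6.symm, show b + (g0 : ℤ) = d from hbd.symm] at R
    exact R
  by_cases h7 : a + (g0 : ℤ) < c
  · have R := lift_B2 (g0 := g0) (hp a (c - g0) b (d - g0)
      (by omega) (by omega) (by omega) (by omega) ha (by rw [← hSdef]; omega))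
    rw [show c - (g0 : ℤ) + g0 = c from by ring, show d - (g0 : ℤ) + g0 = d from by ring] at R
    exact R
  push_neg at h7
  have hbg : (g0 : ℤ) ≤ b := by omega
  by_cases h8 : a ≤ d - (g0 : ℤ)
  · have R := lift_D1 (g0 := g0) (hp (b - g0) a (d - g0) c
      (by omega) h8 (by omega) (by omega) (by omega) (by rw [← hSdef]; omega))
    rw [show b - (g0 : ℤ) + g0 = b from by ring, show d - (g0 : ℤ) + g0 = d from by ring] at R
    exact R
  · push_neg at h8
    have R := lift_D2 (g0 := g0) (hp (b - g0) (d - g0) a c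
      (by omega) (by omega) (by omega) (by omega) (by omega) (by rw [← hSdef]; omega))
    rw [show b - (g0 : ℤ) + g0 = b from by ring, show d - (g0 : ℤ) + g0 = d from by ring] at R
    exact R
end

section
/- Suppose h ∈ ℕ^n and a, b are levels with S_a(h) embedded in S_b(h) (written S_a ↪ S_b). Then the affine span of S_a(h) in ℝ^n is a translate of an affine subspace parallel to (i.e., with direction space contained in that of) the affine span of S_b(h); in particular dim(aff span S_a) ≤ dim(aff span S_b). -/
open Finset

/-- Cast a cube vertex to a point of `ℝ^n`. -/
def toR {n : ℕ} (v : Fin n → ℤ) : Fin n → ℝ := fun i => (v i : ℝ)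

/-- `S_a(h)` is embedded in `S_b(h)`: there is a spanning tree of the complete graph
on `S_a(h)` each of whose edges `{u, u'}` extends to a rectangle `u + v = u' + v'`
with `v, v' ∈ S_b(h)`. -/
def Embedded {n : ℕ} (h : Fin n → ℕ) (a b : ℤ) : Prop :=
  ∃ G : SimpleGraph (level h a), G.IsTree ∧
    ∀ u u' : level h a, G.Adj u u' →
      ∃ v v' : Fin n → ℤ, v ∈ level h b ∧ v' ∈ level h b ∧
        (u : Fin n → ℤ) + v = (u' : Fin n → ℤ) + v'

/-- if `S_a ↪ S_b` then the affine span of `S_a` is parallel to (its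
direction is contained in that of) the affine span of `S_b`; in particular its
dimension is at most that of the span of `S_b`. -/
theorem embedded_parallel (n : ℕ) (h : Fin n → ℕ) (a b : ℤ)
    (hab : Embedded h a b) :
    (affineSpan ℝ (toR '' level h a)).direction ≤
      (affineSpan ℝ (toR '' level h b)).direction ∧
    Module.finrank ℝ (affineSpan ℝ (toR '' level h a)).direction ≤
      Module.finrank ℝ (affineSpan ℝ (toR '' level h b)).direction := by
  obtain ⟨G, hT, hE⟩ := hab
  set Db := (affineSpan ℝ (toR '' level h b)).direction with hDb
  have key : ∀ u u' : level h a, toR (u : Fin n → ℤ) - toR (u' : Fin n → ℤ) ∈ Db := by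
    intro u u'
    obtain ⟨w⟩ := hT.isConnected.preconnected u u'
    induction w with
    | nil => simpa using Db.zero_mem
    | cons hadj p ih =>
      rename_i x y z
      obtain ⟨v, v', hv, hv', heq⟩ := hE _ _ hadj
      have h1 : toR (x : Fin n → ℤ) - toR (y : Fin n → ℤ) = toR v' - toR v := by
        funext i
        have := congrFun heq i
        simp only [toR, Pi.add_apply, Pi.sub_apply] at *
        push_cast
        linarith [ (by exact_mod_cast congrArg (Int.cast : ℤ → ℝ) this : ((x : Fin n → ℤ) i : ℝ) + v i = ((y : Fin n → ℤ) i : ℝ) + v' i) ]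
      have h2 : toR v' - toR v ∈ Db := by
        rw [hDb, direction_affineSpan]
        exact vsub_mem_vectorSpan ℝ ⟨v', hv', rfl⟩ ⟨v, hv, rfl⟩
      have h3 : toR (x : Fin n → ℤ) - toR (z : Fin n → ℤ) =
          (toR (x : Fin n → ℤ) - toR (y : Fin n → ℤ)) + (toR (y : Fin n → ℤ) - toR (z : Fin n → ℤ)) := by
        abel
      rw [h3, h1]
      exact Db.add_mem h2 ih
  have hdir : (affineSpan ℝ (toR '' level h a)).direction ≤ Db := by
    rw [direction_affineSpan, vectorSpan_def]
    rw [Submodule.span_le]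
    rintro x ⟨p, ⟨u, hu, rfl⟩, q, ⟨u', hu', rfl⟩, rfl⟩
    exact key ⟨u, hu⟩ ⟨u', hu'⟩
  exact ⟨hdir, Submodule.finrank_mono hdir⟩
end
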